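/- arXiv:1210.5630 — 3 statements merged into one kernel-verified Lean document; each statement's English description precedes it below -/
import Mathlib

section
/- Let e be a projection in the Cuntz algebra O_d commuting with ρ(T) for all T (e.g., e ∈ span{S_i S_j*}), with e ≠ 0 and e ≠ 1. Define Q_1 = e·ρ(1−e) and inductively Q_{N+1} = e·ρ(Q_N). Then each Q_N is a nonzero projection satisfying Q_N · ρ^N(e) = 0 and Q_N · ρ^n(Q_N) = 0 for all 0 < n ≤ N. -/
set_option linter.unusedSectionVars false

/-- The canonical endomorphism `ρ(T) = Σⱼ Sⱼ T Sⱼ*` of the Cuntz algebra. -/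
def cuntzRho {A : Type} [Ring A] [StarRing A] {d : ℕ} (S : Fin d → A) (T : A) : A :=
  ∑ j, S j * T * star (S j)

/-- The cutting projections: `cuntzQ S e 0 = Q₁ = e·ρ(1−e)` and
`cuntzQ S e n = Q_{n+1}`, with `Q_{N+1} = e·ρ(Q_N)`. -/
def cuntzQ {A : Type} [Ring A] [StarRing A] {d : ℕ} (S : Fin d → A) (e : A) :
    ℕ → A
  | 0 => e * cuntzRho S (1 - e)
  | n + 1 => e * cuntzRho S (cuntzQ S e n)

section helpers
variable {A : Type} [Ring A] [StarRing A] {d : ℕ} {S : Fin d → A}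
  (horth : ∀ i j, star (S i) * S j = if i = j then (1 : A) else 0)
  (hsum : ∑ j, S j * star (S j) = 1)

lemma rho_add (a b : A) : cuntzRho S (a + b) = cuntzRho S a + cuntzRho S b := by
  simp [cuntzRho, mul_add, add_mul, Finset.sum_add_distrib]

lemma rho_sub (a b : A) : cuntzRho S (a - b) = cuntzRho S a - cuntzRho S b := by
  simp [cuntzRho, mul_sub, sub_mul, Finset.sum_sub_distrib]

lemma rho_zero : cuntzRho S (0 : A) = 0 := by simp [cuntzRho]

include hsum in
lemma rho_one : cuntzRho S (1 : A) = 1 := by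
  simpa [cuntzRho] using hsum

lemma rho_star (a : A) : cuntzRho S (star a) = star (cuntzRho S a) := by
  simp [cuntzRho, star_sum, star_mul, mul_assoc]

include horth in
lemma rho_mul (a b : A) : cuntzRho S (a * b) = cuntzRho S a * cuntzRho S b := by
  unfold cuntzRho
  rw [Finset.sum_mul_sum]
  have key : ∀ j k : Fin d, (S j * a * star (S j)) * (S k * b * star (S k))
      = if j = k then S j * (a * b) * star (S j) else 0 := by
    intro j k
    have h1 : (S j * a * star (S j)) * (S k * b * star (S k))
        = S j * (a * ((star (S j) * S k) * (b * star (S k)))) := by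
      simp only [mul_assoc]
    rw [h1, horth j k]
    by_cases hjk : j = k
    · subst hjk; simp [mul_assoc]
    · simp [hjk]
  rw [Finset.sum_congr rfl fun j _ => Finset.sum_congr rfl fun k _ => key j k]
  simp

include horth in
lemma rho_S (T : A) (i : Fin d) : cuntzRho S T * S i = S i * T := by
  unfold cuntzRho
  rw [Finset.sum_mul]
  have key : ∀ j, S j * T * star (S j) * S i = if j = i then S j * T else 0 := by
    intro j
    rw [mul_assoc (S j * T), horth j i]
    by_cases h : j = i
    · simp [h]
    · simp [h]
  rw [Finset.sum_congr rfl fun j _ => key j]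
  simp

include horth in
lemma rho_iter_mul (n : ℕ) (a b : A) :
    (cuntzRho S)^[n] (a * b) = (cuntzRho S)^[n] a * (cuntzRho S)^[n] b := by
  induction n with
  | zero => simp
  | succ n ih => simp only [Function.iterate_succ_apply', ih, rho_mul horth]
end helpers

section eSection
variable {A : Type} [Ring A] [StarRing A] {d : ℕ} {S : Fin d → A} {e : A}
  (horth : ∀ i j, star (S i) * S j = if i = j then (1 : A) else 0)
  (hsum : ∑ j, S j * star (S j) = 1)
  (heproj : e * e = e) (hestar : star e = e)
  (hcomm : ∀ T : A, e * cuntzRho S T = cuntzRho S T * e)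

include heproj hcomm horth in
lemma eRho_sq (y : A) :
    (e * cuntzRho S y) * (e * cuntzRho S y) = e * cuntzRho S (y * y) := by
  have h := hcomm y
  calc (e * cuntzRho S y) * (e * cuntzRho S y)
      = e * ((cuntzRho S y * e) * cuntzRho S y) := by simp only [mul_assoc]
    _ = e * ((e * cuntzRho S y) * cuntzRho S y) := by rw [← h]
    _ = (e * e) * (cuntzRho S y * cuntzRho S y) := by simp only [mul_assoc]
    _ = e * cuntzRho S (y * y) := by rw [heproj, rho_mul horth]

include heproj in
lemma one_sub_e_idem : ((1 : A) - e) * (1 - e) = 1 - e := by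
  rw [mul_sub, mul_one, sub_mul, one_mul, heproj, sub_self, sub_zero]

include horth heproj hcomm in
lemma Q_proj (n : ℕ) : cuntzQ S e n * cuntzQ S e n = cuntzQ S e n := by
  induction n with
  | zero =>
      show (e * cuntzRho S (1 - e)) * (e * cuntzRho S (1 - e)) = e * cuntzRho S (1 - e)
      rw [eRho_sq horth heproj hcomm, one_sub_e_idem heproj]
  | succ n ih =>
      show (e * cuntzRho S (cuntzQ S e n)) * (e * cuntzRho S (cuntzQ S e n)) = _
      rw [eRho_sq horth heproj hcomm, ih]
      rfl

include hestar hcomm in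
lemma eRho_star (y : A) (hy : star y = y) :
    star (e * cuntzRho S y) = e * cuntzRho S y := by
  rw [star_mul, ← rho_star, hy, hestar, ← hcomm]

include hestar hcomm in
lemma Q_star (n : ℕ) : star (cuntzQ S e n) = cuntzQ S e n := by
  induction n with
  | zero =>
      exact eRho_star hestar hcomm _ (by rw [star_sub, star_one, hestar])
  | succ n ih => exact eRho_star hestar hcomm _ ih

include horth heproj in
lemma Q_kill (n : ℕ) : cuntzQ S e n * (cuntzRho S)^[n + 1] e = 0 := by
  induction n with
  | zero =>
      show (e * cuntzRho S (1 - e)) * (cuntzRho S)^[1] e = 0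
      rw [Function.iterate_one, mul_assoc, ← rho_mul horth, sub_mul, one_mul, heproj,
        sub_self, rho_zero, mul_zero]
  | succ n ih =>
      show (e * cuntzRho S (cuntzQ S e n)) * (cuntzRho S)^[n + 2] e = 0
      rw [Function.iterate_succ_apply', mul_assoc, ← rho_mul horth, ih, rho_zero, mul_zero]

include horth heproj hcomm in
lemma Q_absorb : ∀ n j : ℕ, j ≤ n → (cuntzRho S)^[j] e * cuntzQ S e n = cuntzQ S e n := by
  intro n
  induction n with
  | zero =>
      intro j hj
      interval_cases j
      show e * (e * cuntzRho S (1 - e)) = e * cuntzRho S (1 - e)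
      rw [← mul_assoc, heproj]
  | succ n ih =>
      intro j hj
      match j with
      | 0 =>
          show e * (e * cuntzRho S (cuntzQ S e n)) = e * cuntzRho S (cuntzQ S e n)
          rw [← mul_assoc, heproj]
      | i + 1 =>
          show (cuntzRho S)^[i + 1] e * (e * cuntzRho S (cuntzQ S e n)) = _
          rw [Function.iterate_succ_apply', ← mul_assoc, ← hcomm, mul_assoc,
            ← rho_mul horth, ih i (by omega)]
          rfl

include horth heproj hcomm in
lemma Q_orth (n : ℕ) : ∀ k, 0 < k → k ≤ n + 1 →
    cuntzQ S e n * (cuntzRho S)^[k] (cuntzQ S e n) = 0 := by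
  intro k hk hkn
  have habs := Q_absorb horth heproj hcomm n (n + 1 - k) (by omega)
  have : (cuntzRho S)^[k] (cuntzQ S e n)
      = (cuntzRho S)^[n + 1] e * (cuntzRho S)^[k] (cuntzQ S e n) := by
    conv_lhs => rw [← habs]
    rw [rho_iter_mul horth, ← Function.iterate_add_apply]
    congr 2
    omega
  rw [this, ← mul_assoc, Q_kill horth heproj, zero_mul]
end eSection

lemma trace_ne_zero_of_idem {d : ℕ} (c : Matrix (Fin d) (Fin d) ℂ) (h : c * c = c)
    (hc : c ≠ 0) : Matrix.trace c ≠ 0 := by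
  set f := Matrix.toLin' c with hfdef
  have hf : f ∘ₗ f = f := by rw [hfdef, ← Matrix.toLin'_mul, h]
  obtain ⟨p, hp⟩ := (LinearMap.isProj_iff_isIdempotentElem f).mpr hf
  intro ht
  have htr : LinearMap.trace ℂ _ f = Matrix.trace c := by
    rw [LinearMap.trace_eq_matrix_trace ℂ (Pi.basisFun ℂ (Fin d)) f,
      LinearMap.toMatrix_eq_toMatrix', hfdef, LinearMap.toMatrix'_toLin']
  have h0 : (Module.finrank ℂ p : ℂ) = 0 := by rw [← hp.trace, htr, ht]
  have hp0 : p = ⊥ := Submodule.finrank_eq_zero.mp (by exact_mod_cast h0)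
  have hfz : f = 0 := by
    apply LinearMap.ext
    intro x
    have := hp.map_mem x
    rw [hp0, Submodule.mem_bot] at this
    simpa using this
  apply hc
  have h2 : LinearMap.toMatrix' f = c := by rw [hfdef]; exact LinearMap.toMatrix'_toLin' c
  rw [hfz, LinearMap.toMatrix'.map_zero] at h2
  exact h2.symm

section nz
set_option linter.unusedSectionVars false
variable {A : Type} [Ring A] [StarRing A] [Algebra ℂ A] [Nontrivial A] {d : ℕ} {S : Fin d → A}
  {e : A}
  (horth : ∀ i j, star (S i) * S j = if i = j then (1 : A) else 0)
  (hsum : ∑ j, S j * star (S j) = 1)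
  (heproj : e * e = e) (he0 : e ≠ 0) (he1 : e ≠ 1)
  (hespan : e ∈ Submodule.span ℂ {x : A | ∃ i j, x = S i * star (S j)})

lemma smul_one_inj {a b : ℂ} (h : a • (1 : A) = b • (1 : A)) : a = b := by
  by_contra hne
  have h1 : (a - b) • (1 : A) = 0 := by rw [sub_smul, h, sub_self]
  have h2 := congrArg (fun x => (a - b)⁻¹ • x) h1
  simp only [smul_smul, inv_mul_cancel₀ (sub_ne_zero.mpr hne), one_smul, smul_zero] at h2
  exact one_ne_zero h2

lemma smul_cancel {t : ℂ} (ht : t ≠ 0) {x : A} (h : t • x = 0) : x = 0 := by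
  have h2 := congrArg (fun y => t⁻¹ • y) h
  simpa [smul_smul, inv_mul_cancel₀ ht] using h2

include horth in
lemma extract (b : Matrix (Fin d) (Fin d) ℂ) (k l : Fin d) :
    star (S k) * ((∑ i, ∑ j, b i j • (S i * star (S j))) * S l) = b k l • (1 : A) := by
  simp only [Finset.sum_mul, Finset.mul_sum, smul_mul_assoc, mul_smul_comm, mul_assoc, horth]
  simp only [Finset.sum_ite_eq, Finset.sum_ite_eq', smul_ite, smul_zero,
    mul_ite, mul_one, mul_zero, Finset.mem_univ, if_true, horth]

include hespan in
lemma e_decomp : ∃ c : Matrix (Fin d) (Fin d) ℂ,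
    e = ∑ i, ∑ j, c i j • (S i * star (S j)) := by
  refine Submodule.span_induction ?_ ?_ ?_ ?_ hespan
  · rintro x ⟨i, j, rfl⟩
    refine ⟨fun i' j' => if i' = i then (if j' = j then 1 else 0) else 0, ?_⟩
    simp [ite_smul, Finset.sum_ite_eq, Finset.sum_ite_eq']
  · exact ⟨0, by simp⟩
  · rintro x y hx hy ⟨b, rfl⟩ ⟨c, rfl⟩
    exact ⟨b + c, by simp [Matrix.add_apply, add_smul, Finset.sum_add_distrib]⟩
  · rintro a x hx ⟨b, rfl⟩
    exact ⟨a • b, by simp [Matrix.smul_apply, smul_smul, Finset.smul_sum]⟩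

include horth hsum heproj he0 he1 hespan in
lemma Q_trace_data : ∃ t : ℂ, t ≠ 0 ∧
    ∀ T : A, ∑ j, star (S j) * ((e * cuntzRho S T) * S j) = t • T := by
  obtain ⟨c, hc⟩ := e_decomp hespan
  have hSe : ∀ k l, star (S k) * (e * S l) = c k l • (1 : A) := by
    intro k l
    conv_lhs => rw [hc]
    exact extract horth c k l
  -- c is idempotent
  have hidem : c * c = c := by
    ext k l
    apply smul_one_inj (A := A)
    have e2 : ∑ m, (star (S k) * (e * S m)) * (star (S m) * (e * S l))
        = c k l • (1 : A) := by
      have hterm : ∀ m, (star (S k) * (e * S m)) * (star (S m) * (e * S l))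
          = star (S k) * (e * (S m * (star (S m) * (e * S l)))) := by
        intro m; simp only [mul_assoc]
      rw [Finset.sum_congr rfl fun m _ => hterm m, ← Finset.mul_sum, ← Finset.mul_sum]
      have hsX : ∑ m, S m * (star (S m) * (e * S l)) = e * S l := by
        simp only [← mul_assoc, ← Finset.sum_mul, hsum, one_mul]
      rw [hsX, show e * (e * S l) = (e * e) * S l by rw [mul_assoc], heproj, hSe]
    have e1 : ∑ m, (star (S k) * (e * S m)) * (star (S m) * (e * S l))
        = (c * c) k l • (1 : A) := by
      rw [Matrix.mul_apply, Finset.sum_smul]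
      refine Finset.sum_congr rfl fun m _ => ?_
      rw [hSe k m, hSe m l, smul_mul_smul_comm, one_mul]
    rw [← e1, e2]
  have hcne : c ≠ 0 := by
    intro h0
    apply he0
    rw [hc, h0]
    simp
  refine ⟨Matrix.trace c, trace_ne_zero_of_idem c hidem hcne, ?_⟩
  intro T
  have hterm : ∀ j, star (S j) * ((e * cuntzRho S T) * S j)
      = (star (S j) * (e * S j)) * T := by
    intro j
    rw [mul_assoc e, rho_S horth T j]
    simp only [mul_assoc]
  rw [Finset.sum_congr rfl fun j _ => hterm j]
  simp only [hSe, smul_mul_assoc, one_mul, ← Finset.sum_smul]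
  rw [Matrix.trace]
  rfl

include horth hsum heproj he0 he1 hespan in
lemma Q_ne (n : ℕ) : cuntzQ S e n ≠ 0 := by
  obtain ⟨t, ht, hPsi⟩ := Q_trace_data horth hsum heproj he0 he1 hespan
  induction n with
  | zero =>
      intro h0
      have h1 := hPsi (1 - e)
      rw [show e * cuntzRho S (1 - e) = cuntzQ S e 0 from rfl, h0] at h1
      simp only [mul_zero, zero_mul, Finset.sum_const_zero] at h1
      exact sub_ne_zero_of_ne (Ne.symm he1) (smul_cancel ht h1.symm)
  | succ n ih =>
      intro h0
      have h1 := hPsi (cuntzQ S e n)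
      rw [show e * cuntzRho S (cuntzQ S e n) = cuntzQ S e (n + 1) from rfl, h0] at h1
      simp only [mul_zero, zero_mul, Finset.sum_const_zero] at h1
      exact ih (smul_cancel ht h1.symm)
end nz

/-- Let `e` be a projection in the Cuntz algebra `O_d` commuting with
`ρ(T)` for all `T` (e.g. `e ∈ span{Sᵢ Sⱼ*}`), with `e ≠ 0` and `e ≠ 1`. Define
`Q₁ = e·ρ(1−e)` and inductively `Q_{N+1} = e·ρ(Q_N)`. Then each `Q_N` is a nonzero
projection with `Q_N · ρ^N(e) = 0` and `Q_N · ρ^n(Q_N) = 0` for `0 < n ≤ N`. -/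
theorem stmt4 {A : Type} [Ring A] [StarRing A] [Algebra ℂ A] [Nontrivial A] {d : ℕ}
    (S : Fin d → A)
    (horth : ∀ i j, star (S i) * S j = if i = j then (1 : A) else 0)
    (hsum : ∑ j, S j * star (S j) = 1)
    (e : A) (heproj : e * e = e) (hestar : star e = e) (he0 : e ≠ 0) (he1 : e ≠ 1)
    (hespan : e ∈ Submodule.span ℂ {x : A | ∃ i j, x = S i * star (S j)})
    (hcomm : ∀ T : A, e * cuntzRho S T = cuntzRho S T * e)
    (N : ℕ) (hN : 1 ≤ N) :
    (cuntzQ S e (N - 1)) * (cuntzQ S e (N - 1)) = cuntzQ S e (N - 1) ∧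
    star (cuntzQ S e (N - 1)) = cuntzQ S e (N - 1) ∧
    cuntzQ S e (N - 1) ≠ 0 ∧
    (cuntzQ S e (N - 1)) * (cuntzRho S)^[N] e = 0 ∧
    ∀ n, 0 < n → n ≤ N → (cuntzQ S e (N - 1)) * (cuntzRho S)^[n] (cuntzQ S e (N - 1)) = 0 := by
  obtain ⟨n, rfl⟩ : ∃ n, N = n + 1 := ⟨N - 1, by omega⟩
  have hn : n + 1 - 1 = n := by omega
  rw [hn]
  exact ⟨Q_proj horth heproj hcomm n, Q_star hestar hcomm n,
    Q_ne horth hsum heproj he0 he1 hespan n, Q_kill horth heproj n,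
    fun k hk hkn => Q_orth horth heproj hcomm n k hk hkn⟩
end

section
/- Let M be the ℤ-submodule of ℚ(T)-style fractions { P(T)/T^n : P ∈ ℤ[T], deg P ≤ n, n ∈ ℕ } inside the localization ℤ[T][1/T], and let φ : M → M be the map φ(P(T)/T^n) = P(T)/T^{n+1}. Then the cokernel of (id − φ) is isomorphic to ℤ, via the evaluation map Q(T)/T^n ↦ Q(1); moreover id − φ is injective. -/
open LaurentPolynomial

def fracM : Set (LaurentPolynomial ℤ) :=
  {f | ∃ (n : ℕ) (P : Polynomial ℤ), P.natDegree ≤ n ∧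
        f = T (-(n : ℤ)) * Polynomial.toLaurent P}

def evalOne (f : LaurentPolynomial ℤ) : ℤ := f.coeff.sum fun _ c => c

noncomputable def ev : LaurentPolynomial ℤ →+* ℤ :=
  AddMonoidAlgebra.liftNCRingHom (RingHom.id ℤ) 1 (fun _ _ => Commute.all _ _)

lemma ev_single (a b : ℤ) : ev (AddMonoidAlgebra.single a b) = b := by
  have : ev (AddMonoidAlgebra.single a b) = AddMonoidAlgebra.liftNC ((RingHom.id ℤ) : ℤ →+ ℤ)
      (1 : Multiplicative ℤ →* ℤ) (AddMonoidAlgebra.single a b) := rfl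
  rw [this, AddMonoidAlgebra.liftNC_single]; simp

lemma ev_T (n : ℤ) : ev (T n) = 1 := by
  simpa using ev_single n 1

lemma ev_eq (f : LaurentPolynomial ℤ) : ev f = evalOne f := by
  induction f using AddMonoidAlgebra.induction_linear with
  | zero => simp [evalOne]
  | add f g hf hg =>
      rw [map_add, hf, hg]
      simp only [evalOne, AddMonoidAlgebra.coeff_add]
      rw [Finsupp.sum_add_index (by simp) (fun _ _ _ _ => rfl)]
  | single a b =>
      rw [ev_single]
      simp only [evalOne, AddMonoidAlgebra.coeff_single]
      rw [Finsupp.sum_single_index rfl]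

lemma ev_toLaurent (P : Polynomial ℤ) : ev (Polynomial.toLaurent P) = P.eval 1 := by
  have h : ev.comp (Polynomial.toLaurent (R := ℤ)) = Polynomial.evalRingHom 1 := by
    apply Polynomial.ringHom_ext
    · intro a
      simp only [RingHom.comp_apply, Polynomial.toLaurent_C, Polynomial.eval_C,
        Polynomial.coe_evalRingHom]
      exact ev_single 0 a
    · simp [Polynomial.toLaurent_X, ev_T]
  exact RingHom.congr_fun h P

/-- for the shift `φ(P(T)/Tⁿ) = P(T)/Tⁿ⁺¹` (i.e. multiplication by
`T⁻¹`) on `M`, the map `id − φ` is injective, its image consists exactly of the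
elements of `M` vanishing at `T = 1`, and evaluation at `T = 1` is onto `ℤ`; thus
evaluation at `T = 1` induces an isomorphism `coker(id − φ) ≅ ℤ`. -/
theorem stmt10 :
    (∀ f ∈ fracM, f - T (-1 : ℤ) * f = 0 → f = 0) ∧
    (∀ f ∈ fracM, (∃ g ∈ fracM, g - T (-1 : ℤ) * g = f) ↔ evalOne f = 0) ∧
    (∀ m : ℤ, ∃ f ∈ fracM, evalOne f = m) := by
  have hTne : (1 : LaurentPolynomial ℤ) - T (-1 : ℤ) ≠ 0 := by
    intro h
    have h1 : (T (-1 : ℤ) : LaurentPolynomial ℤ) = 1 := (sub_eq_zero.mp h).symm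
    have h2 : (AddMonoidAlgebra.single (-1 : ℤ) (1 : ℤ)) = AddMonoidAlgebra.single (0 : ℤ) (1 : ℤ) := by
      exact h1
    rcases AddMonoidAlgebra.single_inj.mp h2 with ⟨h3, _⟩ | ⟨h3, _⟩
    · omega
    · exact one_ne_zero h3
  refine ⟨?_, ?_, ?_⟩
  · intro f _ hf
    have : ((1 : LaurentPolynomial ℤ) - T (-1 : ℤ)) * f = 0 := by
      rw [sub_mul, one_mul]; exact hf
    rcases mul_eq_zero.mp this with h | h
    · exact absurd h hTne
    · exact h
  · rintro f ⟨n, P, hdeg, rfl⟩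
    constructor
    · rintro ⟨g, _, hgf⟩
      rw [← hgf, ← ev_eq, map_sub, map_mul, ev_T, one_mul, sub_self]
    · intro hev
      have hroot : P.IsRoot 1 := by
        have := ev_eq (T (-(n : ℤ)) * Polynomial.toLaurent P)
        rw [map_mul, ev_T, one_mul, ev_toLaurent, hev] at this
        exact this
      obtain ⟨R, hR⟩ := (Polynomial.dvd_iff_isRoot (a := (1:ℤ))).mpr hroot
      by_cases hR0 : R = 0
      · refine ⟨0, ⟨0, 0, by simp, by simp⟩, ?_⟩
        simp [hR, hR0]
      · have hdegR : R.natDegree + 1 ≤ n := by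
          have : P.natDegree = 1 + R.natDegree := by
            rw [hR, Polynomial.natDegree_mul (Polynomial.X_sub_C_ne_zero 1) hR0,
              Polynomial.natDegree_X_sub_C]
          omega
        refine ⟨T (-(n : ℤ)) * Polynomial.toLaurent (Polynomial.X * R),
          ⟨n, Polynomial.X * R, ?_, rfl⟩, ?_⟩
        · rw [Polynomial.natDegree_mul (Polynomial.X_ne_zero (R := ℤ)) hR0, Polynomial.natDegree_X]
          omega
        · have key : (T (-1 : ℤ) : LaurentPolynomial ℤ) * (T (-(n : ℤ)) * T (1 : ℤ)) = T (-(n : ℤ)) := by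
            rw [← T_add, ← T_add]; norm_num
          rw [hR]
          simp only [map_mul, map_sub, Polynomial.toLaurent_X, Polynomial.toLaurent_C, map_one]
          calc T (-(n:ℤ)) * (T 1 * Polynomial.toLaurent R)
                - T (-1:ℤ) * (T (-(n:ℤ)) * (T 1 * Polynomial.toLaurent R))
              = T (-(n:ℤ)) * (T 1 * Polynomial.toLaurent R)
                - (T (-1:ℤ) * (T (-(n:ℤ)) * T 1)) * Polynomial.toLaurent R := by ring
            _ = T (-(n:ℤ)) * ((T 1 - 1) * Polynomial.toLaurent R) := by rw [key]; ring
  · intro m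
    refine ⟨T (-(0:ℕ) : ℤ) * Polynomial.toLaurent (Polynomial.C m),
      ⟨0, Polynomial.C m, by simp, rfl⟩, ?_⟩
    rw [← ev_eq, map_mul, ev_T, one_mul, ev_toLaurent, Polynomial.eval_C]
end

section
/- Let G be a finite (or compact) group and α a finite-dimensional representation. Define the relation on irreducible representations: t ∼ t' iff t and t' both occur in some common iterated tensor product of irreducibles. Then ∼ is an equivalence relation, and the tensor product descends to a well-defined group operation on the set of equivalence classes (the chain group), with identity the class of the trivial representation. -/
open CategoryTheory MonoidalCategory

/-- `t` occurs in `π`: there is a nonzero morphism of representations `t ⟶ π`. -/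
def occursIn {G : Type} [Group G] (t π : FDRep ℂ G) : Prop :=
  ∃ f : t ⟶ π, f ≠ 0

/-- The iterated tensor product `τ₁ ⊗ ⋯ ⊗ τₙ` of a list of representations. -/
noncomputable def tensorList {G : Type} [Group G] (l : List (FDRep ℂ G)) :
    FDRep ℂ G :=
  l.foldr (fun a b => a ⊗ b) (𝟙_ (FDRep ℂ G))

/-- The chain relation: `t ∼ t'` iff `t` and `t'` both occur in some common
iterated tensor product `τ₁ ⊗ ⋯ ⊗ τₙ` of irreducible representations. -/
def chainRel {G : Type} [Group G] (t t' : FDRep ℂ G) : Prop :=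
  ∃ l : List (FDRep ℂ G), l ≠ [] ∧ (∀ τ ∈ l, Simple τ) ∧
    occursIn t (tensorList l) ∧ occursIn t' (tensorList l)

namespace Stmt17Aux

variable {G : Type} [Group G]

lemma hom_eq_zero_iff {X Y : FDRep ℂ G} (f : X ⟶ Y) :
    f = 0 ↔ (f.hom.hom.hom : X →ₗ[ℂ] Y) = 0 :=
  ⟨fun h => by subst h; rfl, fun h => by ext x; exact LinearMap.congr_fun h x⟩

lemma exists_apply_ne_zero {X Y : FDRep ℂ G} {f : X ⟶ Y} (hf : f ≠ 0) :
    ∃ x : X, f.hom x ≠ 0 := by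
  by_contra h
  push_neg at h
  exact hf ((hom_eq_zero_iff f).mpr (LinearMap.ext fun x => h x))

lemma comm_apply {X Y : FDRep ℂ G} (f : X ⟶ Y) (g : G) (x : X) :
    f.hom (X.ρ g x) = Y.ρ g (f.hom x) :=
  ConcreteCategory.congr_hom (f.comm g) x

lemma comp_hom_apply {X Y Z : FDRep ℂ G} (f : X ⟶ Y) (g : Y ⟶ Z) (x : X) :
    (f ≫ g).hom x = g.hom (f.hom x) := rfl

/-- Composition with a morphism with injective underlying map preserves nonzero-ness. -/
lemma comp_ne_zero {X Y Z : FDRep ℂ G} {f : X ⟶ Y} (g : Y ⟶ Z) (hf : f ≠ 0)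
    (hg : Function.Injective (g.hom.hom.hom : Y →ₗ[ℂ] Z)) : f ≫ g ≠ 0 := by
  obtain ⟨x, hx⟩ := exists_apply_ne_zero hf
  intro h
  have h0 : (f ≫ g).hom x = 0 := by rw [h]; rfl
  rw [comp_hom_apply] at h0
  exact hx (hg (by rw [map_zero]; exact h0))

lemma comp_iso_hom_ne_zero {X Y Z : FDRep ℂ G} {f : X ⟶ Y} (i : Y ≅ Z) (hf : f ≠ 0) :
    f ≫ i.hom ≠ 0 := by
  intro h
  apply hf
  have : (f ≫ i.hom) ≫ i.inv = 0 := by rw [h]; simp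
  simpa using this

lemma comp_iso_inv_ne_zero {X Y Z : FDRep ℂ G} {f : X ⟶ Y} (i : Z ≅ Y) (hf : f ≠ 0) :
    f ≫ i.inv ≠ 0 := by
  intro h
  apply hf
  have : (f ≫ i.inv) ≫ i.hom = 0 := by rw [h]; simp
  simpa using this

/-- A morphism with injective underlying linear map is a monomorphism. -/
lemma mono_of_injective {X Y : FDRep ℂ G} (f : X ⟶ Y)
    (hf : Function.Injective (f.hom.hom.hom : X →ₗ[ℂ] Y)) : Mono f := by
  constructor
  intro Z u v huv
  have h2 : ∀ z : Z, u.hom z = v.hom z := fun z =>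
    hf (ConcreteCategory.congr_hom (congrArg Action.Hom.hom huv) z)
  ext z
  exact h2 z

/-- The restriction of the representation to an invariant submodule. -/
noncomputable def resRep (X : FDRep ℂ G) (K : Submodule ℂ X)
    (hK : ∀ (g : G) x, x ∈ K → X.ρ g x ∈ K) : Representation ℂ G K where
  toFun g := (X.ρ g).restrict (fun x hx => hK g x hx)
  map_one' := by ext x; simp [LinearMap.restrict_apply]
  map_mul' g h := by ext x; simp [LinearMap.restrict_apply]

/-- An invariant submodule as a representation. -/
noncomputable def subRep (X : FDRep ℂ G) (K : Submodule ℂ X)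
    (hK : ∀ (g : G) x, x ∈ K → X.ρ g x ∈ K) : FDRep ℂ G :=
  FDRep.of (resRep X K hK)

/-- The inclusion of an invariant submodule. -/
noncomputable def subRepι (X : FDRep ℂ G) (K : Submodule ℂ X)
    (hK : ∀ (g : G) x, x ∈ K → X.ρ g x ∈ K) : subRep X K hK ⟶ X where
  hom := ConcreteCategory.ofHom K.subtype
  comm g := by ext x; rfl

/-- A morphism whose underlying linear map is bijective is an isomorphism. -/
lemma isIso_of_bijective {X Y : FDRep ℂ G} (f : X ⟶ Y)
    (hf : Function.Bijective (f.hom.hom.hom : X →ₗ[ℂ] Y)) : IsIso f := by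
  let e := LinearEquiv.ofBijective (f.hom.hom.hom : X →ₗ[ℂ] Y) hf
  have he : ∀ x, e x = f.hom x := fun x => rfl
  refine ⟨⟨⟨ConcreteCategory.ofHom e.symm.toLinearMap, fun g => ?_⟩, ?_, ?_⟩⟩
  · ext y
    apply hf.1
    have h1 : ∀ z, f.hom (e.symm z) = z := fun z => e.apply_symm_apply z
    show f.hom (e.symm (Y.ρ g y)) = f.hom (X.ρ g (e.symm y))
    rw [h1, show f.hom ((X.ρ g) (e.symm y)) = Y.ρ g (f.hom (e.symm y)) from
      ConcreteCategory.congr_hom (f.comm g) (e.symm y), h1]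
  · ext x
    show e.symm (f.hom x) = x
    rw [← he]; exact e.symm_apply_apply x
  · ext y
    show f.hom (e.symm y) = y
    rw [← he]; exact e.apply_symm_apply y

/-- Concrete irreducibility: nontrivial with no proper nonzero invariant subspace. -/
def IsIrr (X : FDRep ℂ G) : Prop :=
  Nontrivial X ∧ ∀ K : Submodule ℂ X, (∀ (g : G) x, x ∈ K → X.ρ g x ∈ K) → K = ⊥ ∨ K = ⊤

lemma nontrivial_of_simple (X : FDRep ℂ G) [Simple X] : Nontrivial X := by
  by_contra h
  rw [not_nontrivial_iff_subsingleton] at h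
  apply CategoryTheory.id_nonzero X
  rw [hom_eq_zero_iff]
  haveI hs : Subsingleton (↑X.V.obj) := h
  exact LinearMap.ext fun (x : X) => Subsingleton.elim (α := X) _ _

lemma isIrr_of_simple (X : FDRep ℂ G) [Simple X] : IsIrr X := by
  refine ⟨nontrivial_of_simple X, fun K hK => ?_⟩
  by_cases hbot : K = ⊥
  · exact Or.inl hbot
  right
  obtain ⟨x, hxK, hx0⟩ := Submodule.exists_mem_ne_zero_of_ne_bot hbot
  let ι := subRepι X K hK
  haveI : Mono ι := mono_of_injective ι K.injective_subtype
  have hι : ι ≠ 0 := by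
    intro h
    apply hx0
    have : ι.hom ⟨x, hxK⟩ = 0 := by rw [h]; rfl
    exact this
  haveI : IsIso ι := isIso_of_mono_of_nonzero hι
  apply Submodule.eq_top_iff'.mpr
  intro y
  have : ι.hom ((CategoryTheory.inv ι).hom y) = y := by
    rw [← comp_hom_apply, IsIso.inv_hom_id]; rfl
  rw [← this]
  exact ((CategoryTheory.inv ι).hom y).2

lemma simple_of_isIrr (X : FDRep ℂ G) (h : IsIrr X) : Simple X := by
  obtain ⟨hnt, hsub⟩ := h
  constructor
  intro Y f hm
  constructor
  · intro hiso hf0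
    obtain ⟨x, hx⟩ := exists_ne (0 : X)
    apply hx
    have h2 : (CategoryTheory.inv f ≫ f).hom x = x := by rw [IsIso.inv_hom_id]; rfl
    rw [comp_hom_apply] at h2
    rw [← h2, show f.hom = (0 : Y ⟶ X).hom from congrArg Action.Hom.hom hf0]
    rfl
  · intro hf
    -- surjective
    have hRinv : ∀ (g : G) x, x ∈ LinearMap.range (f.hom.hom.hom : Y →ₗ[ℂ] X) →
        X.ρ g x ∈ LinearMap.range (f.hom.hom.hom : Y →ₗ[ℂ] X) := by
      rintro g x ⟨y, rfl⟩
      exact ⟨Y.ρ g y, comm_apply f g y⟩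
    have hrange : LinearMap.range (f.hom.hom.hom : Y →ₗ[ℂ] X) = ⊤ := by
      rcases hsub (LinearMap.range (f.hom.hom.hom : Y →ₗ[ℂ] X)) hRinv with h | h
      · exfalso
        obtain ⟨y, hy⟩ := exists_apply_ne_zero hf
        exact hy (show f.hom.hom.hom y = 0 by simpa [h] using LinearMap.mem_range_self (f.hom.hom.hom : Y →ₗ[ℂ] X) y)
      · exact h
    -- injective
    have hker : LinearMap.ker (f.hom.hom.hom : Y →ₗ[ℂ] X) = ⊥ := by
      have hKinv : ∀ (g : G) x, x ∈ LinearMap.ker (f.hom.hom.hom : Y →ₗ[ℂ] X) →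
          Y.ρ g x ∈ LinearMap.ker (f.hom.hom.hom : Y →ₗ[ℂ] X) := by
        intro g x hx
        rw [LinearMap.mem_ker] at hx ⊢
        have h2 := comm_apply f g x
        rw [show f.hom x = 0 from hx, map_zero] at h2
        exact h2
      let ι := subRepι Y _ hKinv
      have hcomp : ι ≫ f = 0 ≫ f := by
        rw [Limits.zero_comp, hom_eq_zero_iff]
        exact LinearMap.ext fun x => x.2
      have hι : ι = 0 := (cancel_mono f).mp hcomp
      rw [Submodule.eq_bot_iff]
      intro x hx
      have : ι.hom ⟨x, hx⟩ = 0 := by rw [hι]; rfl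
      exact this
    exact isIso_of_bijective f ⟨LinearMap.ker_eq_bot.mp hker, LinearMap.range_eq_top.mp hrange⟩

lemma injective_of_simple {X M : FDRep ℂ G} [Simple X] {f : X ⟶ M} (hf : f ≠ 0) :
    Function.Injective (f.hom.hom.hom : X →ₗ[ℂ] M) := by
  apply LinearMap.ker_eq_bot.mp
  have hKinv : ∀ (g : G) x, x ∈ LinearMap.ker (f.hom.hom.hom : X →ₗ[ℂ] M) →
      X.ρ g x ∈ LinearMap.ker (f.hom.hom.hom : X →ₗ[ℂ] M) := by
    intro g x hx
    rw [LinearMap.mem_ker] at hx ⊢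
    have h2 := comm_apply f g x
    rw [show f.hom x = 0 from hx, map_zero] at h2
    exact h2
  rcases (isIrr_of_simple X).2 _ hKinv with h | h
  · exact h
  · exfalso
    apply hf
    rw [hom_eq_zero_iff]
    refine LinearMap.ext fun x => ?_
    have hx : x ∈ LinearMap.ker (f.hom.hom.hom : X →ₗ[ℂ] M) := by rw [h]; exact Submodule.mem_top
    exact LinearMap.mem_ker.mp hx

/-- A nonzero linear map from the base field is injective. -/
lemma field_inj {N : Type} [AddCommGroup N] [Module ℂ N] (φ : ℂ →ₗ[ℂ] N) (h : φ ≠ 0) :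
    Function.Injective φ := by
  have hφ : φ = LinearMap.toSpanSingleton ℂ N (φ 1) := by
    apply LinearMap.ext_ring
    rw [LinearMap.toSpanSingleton_apply, one_smul]
  have h1 : φ 1 ≠ 0 := by
    intro h1
    apply h
    rw [hφ, h1, LinearMap.toSpanSingleton_zero]
  rw [← LinearMap.ker_eq_bot, hφ, LinearMap.ker_toSpanSingleton ℂ h1]

/-- A nonzero morphism out of the unit object has injective underlying map. -/
lemma unit_injective {M : FDRep ℂ G} {f : 𝟙_ (FDRep ℂ G) ⟶ M} (hf : f ≠ 0) :
    Function.Injective (f.hom.hom.hom : (𝟙_ (FDRep ℂ G) : FDRep ℂ G) →ₗ[ℂ] M) := by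
  have h0 : (f.hom.hom.hom : ℂ →ₗ[ℂ] (M : Type)) ≠ 0 := fun h => hf ((hom_eq_zero_iff f).mpr h)
  exact field_inj (f.hom.hom.hom : ℂ →ₗ[ℂ] (M : Type)) h0

/-- The dual of a simple representation is simple. -/
lemma dual_simple (X : FDRep ℂ G) [Simple X] :
    Simple (FDRep.of (Representation.dual X.ρ)) := by
  haveI : Nontrivial X := nontrivial_of_simple X
  apply simple_of_isIrr
  constructor
  · show Nontrivial (Module.Dual ℂ X)
    have h : 0 < Module.finrank ℂ (Module.Dual ℂ X) := by
      rw [Subspace.dual_finrank_eq]; exact Module.finrank_pos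
    exact Module.nontrivial_of_finrank_pos h
  · intro K hK
    have hK' : ∀ (g : G) (φ : Module.Dual ℂ X), φ ∈ K → Representation.dual X.ρ g φ ∈ K := hK
    have hco : ∀ (g : G) x, x ∈ K.dualCoannihilator → X.ρ g x ∈ K.dualCoannihilator := by
      intro g x hx
      rw [Submodule.mem_dualCoannihilator] at hx ⊢
      intro φ hφ
      have h2 := hx (Representation.dual X.ρ g⁻¹ φ) (hK' g⁻¹ φ hφ)
      simpa [Representation.dual_apply, Module.Dual.transpose_apply] using h2
    rcases (isIrr_of_simple X).2 K.dualCoannihilator hco with h | h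
    · right
      apply Submodule.eq_top_of_finrank_eq
      have h3 := Subspace.finrank_add_finrank_dualCoannihilator_eq K
      rw [h, finrank_bot] at h3
      show Module.finrank ℂ ↥K = Module.finrank ℂ (Module.Dual ℂ X)
      rw [Subspace.dual_finrank_eq]
      simpa using h3
    · left
      rw [Submodule.eq_bot_iff]
      intro φ hφ
      apply LinearMap.ext
      intro x
      have hx : x ∈ K.dualCoannihilator := h ▸ Submodule.mem_top
      rw [Submodule.mem_dualCoannihilator] at hx
      exact hx φ hφ

/-- A nonzero invariant vector of `Hom(X, M)` gives a morphism from the unit. -/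
noncomputable def invHom {X M : FDRep ℂ G}
    (v : (Representation.linHom X.ρ M.ρ).invariants) :
    𝟙_ (FDRep ℂ G) ⟶ FDRep.of (Representation.linHom X.ρ M.ρ) where
  hom := ConcreteCategory.ofHom (C := FGModuleCat ℂ) (LinearMap.toSpanSingleton ℂ ((X : Type) →ₗ[ℂ] M) v.1)
  comm g := by
    refine ConcreteCategory.hom_ext _ _ (fun (c : ℂ) => ?_)
    show LinearMap.toSpanSingleton ℂ _ v.1 ((𝟙_ (FDRep ℂ G)).ρ g c) =
      (Representation.linHom X.ρ M.ρ) g (LinearMap.toSpanSingleton ℂ _ v.1 c)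
    have h1 : (𝟙_ (FDRep ℂ G)).ρ g c = c := rfl
    rw [h1, LinearMap.toSpanSingleton_apply, map_smul, v.2 g]

/-- If `X` occurs in `M` then the unit occurs in `Xᵛ ⊗ M`. -/
lemma unit_to_dual_tensor {X M : FDRep ℂ G} (h : ∃ f : X ⟶ M, f ≠ 0) :
    ∃ u : 𝟙_ (FDRep ℂ G) ⟶ FDRep.of (Representation.dual X.ρ) ⊗ M, u ≠ 0 := by
  obtain ⟨f, hf⟩ := h
  let E := Representation.linHom.invariantsEquivFDRepHom X M
  let v := E.symm f
  have hv1 : (v.1 : (X : Type) →ₗ[ℂ] M) ≠ 0 := by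
    intro h0
    apply hf
    have hv0 : v = 0 := Subtype.ext h0
    have h2 : E v = f := E.apply_symm_apply f
    rw [hv0, map_zero] at h2
    exact h2.symm
  let h0 : 𝟙_ (FDRep ℂ G) ⟶ FDRep.of (Representation.linHom X.ρ M.ρ) := invHom v
  have hh0 : h0 ≠ 0 := by
    intro hz
    apply hv1
    have hz1 : h0.hom (1 : ℂ) = 0 := by rw [hz]; rfl
    have h2 : h0.hom (1 : ℂ) = (v.1 : (X : Type) →ₗ[ℂ] M) := by
      show LinearMap.toSpanSingleton ℂ _ v.1 (1 : ℂ) = _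
      rw [LinearMap.toSpanSingleton_apply, one_smul]
    rw [h2] at hz1
    exact hz1
  exact ⟨h0 ≫ (FDRep.dualTensorIsoLinHom X.ρ M).inv, comp_iso_inv_ne_zero _ hh0⟩

lemma whiskerLeft_injective (X : FDRep ℂ G) {Y Z : FDRep ℂ G} {f : Y ⟶ Z}
    (hf : Function.Injective (f.hom.hom.hom : Y →ₗ[ℂ] Z)) :
    Function.Injective ((X ◁ f).hom.hom.hom : (X ⊗ Y : FDRep ℂ G) →ₗ[ℂ] (X ⊗ Z : FDRep ℂ G)) := by
  have : ((X ◁ f).hom.hom.hom : (X ⊗ Y : FDRep ℂ G) →ₗ[ℂ] (X ⊗ Z : FDRep ℂ G)) =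
      LinearMap.lTensor (R := ℂ) ↑X.V (f.hom.hom.hom : Y.V →ₗ[ℂ] Z.V) := rfl
  rw [this]
  exact Module.Flat.lTensor_preserves_injective_linearMap _ hf

lemma whiskerRight_injective (X : FDRep ℂ G) {Y Z : FDRep ℂ G} {f : Y ⟶ Z}
    (hf : Function.Injective (f.hom.hom.hom : Y →ₗ[ℂ] Z)) :
    Function.Injective ((f ▷ X).hom.hom.hom : (Y ⊗ X : FDRep ℂ G) →ₗ[ℂ] (Z ⊗ X : FDRep ℂ G)) := by
  have : ((f ▷ X).hom.hom.hom : (Y ⊗ X : FDRep ℂ G) →ₗ[ℂ] (Z ⊗ X : FDRep ℂ G)) =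
      LinearMap.rTensor (R := ℂ) ↑X.V (f.hom.hom.hom : Y.V →ₗ[ℂ] Z.V) := rfl
  rw [this]
  exact Module.Flat.rTensor_preserves_injective_linearMap _ hf

lemma tensorHom_injective {X Y Z W : FDRep ℂ G} {f : X ⟶ Y} {g : Z ⟶ W}
    (hf : Function.Injective (f.hom.hom.hom : X →ₗ[ℂ] Y))
    (hg : Function.Injective (g.hom.hom.hom : Z →ₗ[ℂ] W)) :
    Function.Injective ((f ⊗ₘ g).hom.hom.hom : (X ⊗ Z : FDRep ℂ G) →ₗ[ℂ] (Y ⊗ W : FDRep ℂ G)) := by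
  rw [MonoidalCategory.tensorHom_def]
  have h1 := whiskerRight_injective Z hf
  have h2 := whiskerLeft_injective Y hg
  intro a b hab
  apply h1
  apply h2
  exact hab

/-- `tensorList` of an append is isomorphic to the tensor product of the parts. -/
noncomputable def tensorListAppend (l m : List (FDRep ℂ G)) :
    tensorList (l ++ m) ≅ tensorList l ⊗ tensorList m := by
  induction l with
  | nil => exact (λ_ (tensorList m)).symm
  | cons a l ih =>
      exact (whiskerLeftIso a ih) ≪≫ (α_ a (tensorList l) (tensorList m)).symm

lemma occursIn_of_iso {t M N : FDRep ℂ G} (i : M ≅ N) (h : occursIn t M) : occursIn t N := by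
  obtain ⟨f, hf⟩ := h
  exact ⟨f ≫ i.hom, comp_iso_hom_ne_zero i hf⟩

lemma occursIn_self_tensorList {t : FDRep ℂ G} [Simple t] : occursIn t (tensorList [t]) := by
  refine ⟨(ρ_ t).inv, ?_⟩
  intro h
  apply CategoryTheory.id_nonzero t
  have : (ρ_ t).inv ≫ (ρ_ t).hom = 𝟙 t := (ρ_ t).inv_hom_id
  rw [show (ρ_ t).inv = 0 from h, Limits.zero_comp] at this
  exact this.symm

lemma chainRel_refl (t : FDRep ℂ G) [Simple t] : chainRel t t := by
  refine ⟨[t], by simp, ?_, occursIn_self_tensorList, occursIn_self_tensorList⟩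
  intro τ hτ
  rw [List.mem_singleton] at hτ
  subst hτ
  infer_instance

end Stmt17Aux

open Stmt17Aux

/-- for a finite group `G`, the chain relation `∼` on irreducible
representations is an equivalence relation, the tensor product descends to a
well-defined operation on equivalence classes (the chain group), the class of the
trivial representation is an identity, and inverses exist (via the contragredient);
so the classes form a group. -/
theorem stmt17 {G : Type} [Group G] [Finite G] :
    Equivalence (fun t t' : {V : FDRep ℂ G // Simple V} => chainRel t.1 t'.1) ∧
    (∀ t t₁ s s₁ : FDRep ℂ G, Simple t → Simple t₁ → Simple s → Simple s₁ →
      chainRel t t₁ → chainRel s s₁ →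
      ∀ p q : FDRep ℂ G, Simple p → Simple q →
        occursIn p (t ⊗ s) → occursIn q (t₁ ⊗ s₁) → chainRel p q) ∧
    (∀ t : FDRep ℂ G, Simple t → ∀ p : FDRep ℂ G, Simple p →
      occursIn p (t ⊗ 𝟙_ (FDRep ℂ G)) → chainRel p t) ∧
    (∀ t : FDRep ℂ G, Simple t →
      ∃ t' : FDRep ℂ G, Simple t' ∧ occursIn (𝟙_ (FDRep ℂ G)) (t ⊗ t')) := by
  refine ⟨⟨?_, ?_, ?_⟩, ?_, ?_, ?_⟩
  · -- reflexivity
    intro x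
    haveI := x.2
    exact chainRel_refl x.1
  · -- symmetry
    rintro x y ⟨l, hl, hs, h1, h2⟩
    exact ⟨l, hl, hs, h2, h1⟩
  · -- transitivity
    rintro x y z ⟨l, hl, hsl, hx, hxy⟩ ⟨m, hm, hsm, hyz, hz⟩
    haveI := y.2
    haveI hu_simple : Simple (FDRep.of (Representation.dual (y.1).ρ)) := dual_simple y.1
    obtain ⟨a₂, ha₂⟩ := hxy
    obtain ⟨b₁, hb₁⟩ := hyz
    -- nonzero 𝟙 ⟶ u ⊗ B
    obtain ⟨zc, hzc⟩ := unit_to_dual_tensor ⟨b₁, hb₁⟩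
    -- nonzero 𝟙 ⟶ u ⊗ A, then braid to A ⊗ u
    obtain ⟨yc0, hyc0⟩ := unit_to_dual_tensor ⟨a₂, ha₂⟩
    have hyc : yc0 ≫ (β_ (FDRep.of (Representation.dual (y.1).ρ)) (tensorList l)).hom ≠ 0 :=
      comp_iso_hom_ne_zero _ hyc0
    refine ⟨l ++ FDRep.of (Representation.dual (y.1).ρ) :: m, by simp, ?_, ?_, ?_⟩
    · intro τ hτ
      rw [List.mem_append] at hτ
      rcases hτ with h | h
      · exact hsl τ h
      · rcases List.mem_cons.mp h with h | h
        · subst h; exact hu_simple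
        · exact hsm τ h
    · -- x occurs
      obtain ⟨a₁, ha₁⟩ := hx
      apply occursIn_of_iso (tensorListAppend l (FDRep.of (Representation.dual (y.1).ρ) :: m)).symm
      have h1 : a₁ ≫ (ρ_ (tensorList l)).inv ≠ 0 := comp_iso_inv_ne_zero _ ha₁
      exact ⟨(a₁ ≫ (ρ_ (tensorList l)).inv) ≫ (tensorList l ◁ zc),
        comp_ne_zero _ h1 (whiskerLeft_injective (tensorList l) (unit_injective hzc))⟩
    · -- z occurs
      obtain ⟨b₂, hb₂⟩ := hz
      apply occursIn_of_iso (tensorListAppend l (FDRep.of (Representation.dual (y.1).ρ) :: m)).symm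
      have h1 : b₂ ≫ (λ_ (tensorList m)).inv ≠ 0 := comp_iso_inv_ne_zero _ hb₂
      have h2 : (b₂ ≫ (λ_ (tensorList m)).inv) ≫
          ((yc0 ≫ (β_ (FDRep.of (Representation.dual (y.1).ρ)) (tensorList l)).hom) ▷
            tensorList m) ≠ 0 :=
        comp_ne_zero _ h1 (whiskerRight_injective (tensorList m) (unit_injective hyc))
      exact ⟨((b₂ ≫ (λ_ (tensorList m)).inv) ≫
          ((yc0 ≫ (β_ (FDRep.of (Representation.dual (y.1).ρ)) (tensorList l)).hom) ▷
            tensorList m)) ≫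
          (α_ (tensorList l) (FDRep.of (Representation.dual (y.1).ρ)) (tensorList m)).hom,
        comp_iso_hom_ne_zero _ h2⟩
  · -- multiplication well-defined
    rintro t t₁ s s₁ ht ht₁ hs hs₁ ⟨l, hl, hsl, ⟨f, hf⟩, ⟨f₁, hf₁⟩⟩
      ⟨m, hm, hsm, ⟨g, hg⟩, ⟨g₁, hg₁⟩⟩ p q hp hq ⟨up, hup⟩ ⟨uq, huq⟩
    haveI := ht; haveI := ht₁; haveI := hs; haveI := hs₁
    refine ⟨l ++ m, by simp [hl], ?_, ?_, ?_⟩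
    · intro τ hτ
      rcases List.mem_append.mp hτ with h | h
      · exact hsl τ h
      · exact hsm τ h
    · apply occursIn_of_iso (tensorListAppend l m).symm
      refine ⟨up ≫ (f ⊗ₘ g), ?_⟩
      exact comp_ne_zero _ hup (tensorHom_injective (injective_of_simple hf)
        (injective_of_simple hg))
    · apply occursIn_of_iso (tensorListAppend l m).symm
      refine ⟨uq ≫ (f₁ ⊗ₘ g₁), ?_⟩
      exact comp_ne_zero _ huq (tensorHom_injective (injective_of_simple hf₁)
        (injective_of_simple hg₁))
  · -- unit
    intro t ht p hp hocc
    haveI := ht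
    refine ⟨[t], by simp, ?_, hocc, occursIn_self_tensorList⟩
    intro τ hτ
    rw [List.mem_singleton] at hτ
    subst hτ
    infer_instance
  · -- inverses
    intro t ht
    haveI := ht
    refine ⟨FDRep.of (Representation.dual t.ρ), dual_simple t, ?_⟩
    obtain ⟨c, hc⟩ := unit_to_dual_tensor ⟨𝟙 t, CategoryTheory.id_nonzero t⟩
    exact ⟨c ≫ (β_ (FDRep.of (Representation.dual t.ρ)) t).hom, comp_iso_hom_ne_zero _ hc⟩
end
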